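/- Let h ∈ ℝ⟦X⟧ have constant coefficient 0 and linear coefficient equal to 1, and suppose h ≠ X. If g ∈ ℝ⟦X⟧ satisfies g∘h = g, then g is a constant series, i.e. g = C(coeff 0 g). -/

import Mathlib

open PowerSeries

/-- Substitution (composition) of formal power series: `psComp g f = g ∘ f`,
the substitution of `f` into `g`.  When `f` has zero constant coefficient, the
`n`-th coefficient of `g ∘ f` is `∑_{k=0}^{n} g_k · [zⁿ] fᵏ`. -/
noncomputable def psComp (g f : PowerSeries ℝ) : PowerSeries ℝ :=
  PowerSeries.mk fun n => ∑ k ∈ Finset.range (n + 1),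
    PowerSeries.coeff k g * PowerSeries.coeff n (f ^ k)

lemma coeff_pow_zero_of_lt (w : PowerSeries ℝ) (m : ℕ)
    (hw : ∀ j < m, coeff j w = 0) (i N : ℕ) (hN : N < i * m) :
    coeff N (w ^ i) = 0 := by
  have hd : (X : PowerSeries ℝ) ^ m ∣ w := X_pow_dvd_iff.2 hw
  have : (X : PowerSeries ℝ) ^ (i * m) ∣ w ^ i := by
    rw [Nat.mul_comm, pow_mul]
    exact pow_dvd_pow_of_dvd hd i
  exact X_pow_dvd_iff.1 this N hN

lemma key (w : PowerSeries ℝ) (m : ℕ) (hm : 2 ≤ m)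
    (hw : ∀ j < m, coeff j w = 0) (N k : ℕ) (hk1 : 1 ≤ k) (hk : k ≤ N)
    (hb : N + 3 ≤ k + 2 * m) :
    coeff N ((X + w) ^ k)
      = (if k = N then 1 else 0) + k * coeff (N - k + 1) w := by
  rw [add_pow, map_sum]
  rw [Finset.sum_eq_add_of_mem k (k-1) (by simp) (by
      simp only [Finset.mem_range]; omega) (by omega)]
  · have h1 : coeff N ((X:PowerSeries ℝ)^k * w^(k-k) * ((k.choose k : ℕ) : PowerSeries ℝ)) =
        (if k = N then 1 else 0) := by
      rw [← map_natCast (C : ℝ →+* PowerSeries ℝ) (k.choose k), coeff_mul_C]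
      simp [coeff_X_pow, eq_comm]
    have h2 : coeff N ((X:PowerSeries ℝ)^(k-1) * w^(k-(k-1)) * ((k.choose (k-1) : ℕ) : PowerSeries ℝ)) =
        k * coeff (N - k + 1) w := by
      have e1 : k - (k - 1) = 1 := by omega
      have e2 : k.choose (k-1) = k := by
        have := Nat.choose_symm hk1
        simpa using this
      have e3 : N - (k - 1) = N - k + 1 := by omega
      rw [e1, e2, pow_one, ← map_natCast (C : ℝ →+* PowerSeries ℝ) k, coeff_mul_C,
        coeff_X_pow_mul', if_pos (by omega), e3]
      ring
    rw [h1, h2]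
  · intro c hc hcc
    obtain ⟨hc1, hc2⟩ := hcc
    simp only [Finset.mem_range] at hc
    rw [← map_natCast (C : ℝ →+* PowerSeries ℝ) (k.choose c), coeff_mul_C, coeff_X_pow_mul']
    split_ifs with hcle
    · rw [coeff_pow_zero_of_lt w m hw _ _ (by
        have h2 : 2 ≤ k - c := by omega
        have h3 : 2 * (m-1) ≤ (k-c) * (m-1) := Nat.mul_le_mul_right _ h2
        have hm1 : m - 1 + 1 = m := by omega
        have h4 : (k-c)*(m-1) + (k-c) = (k-c) * m := by rw [← Nat.mul_succ, Nat.succ_eq_add_one, hm1]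
        omega)]
      ring
    · ring

theorem stmt11 (h : PowerSeries ℝ)
    (hh0 : constantCoeff h = 0) (hh1 : coeff 1 h = 1) (hhX : h ≠ X)
    (g : PowerSeries ℝ) (hg : psComp g h = g) :
    g = C (coeff 0 g) := by
  classical
  set w : PowerSeries ℝ := h - X with hwdef
  have hX : h = X + w := by rw [hwdef]; ring
  have hw0 : w ≠ 0 := sub_ne_zero.mpr hhX
  have hex : ∃ j, coeff j w ≠ 0 := by
    by_contra hco
    push_neg at hco
    exact hw0 (PowerSeries.ext fun n => by simp [hco n])
  set m := Nat.find hex with hmdef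
  have hc : coeff m w ≠ 0 := Nat.find_spec hex
  have hlow : ∀ j < m, coeff j w = 0 := fun j hj => not_not.mp (Nat.find_min hex hj)
  have w0 : coeff 0 w = 0 := by
    simp [hwdef, coeff_zero_eq_constantCoeff, hh0]
  have w1 : coeff 1 w = 0 := by
    simp [hwdef, hh1]
  have hm : 2 ≤ m := by
    by_contra hm'
    push_neg at hm'
    interval_cases m
    · exact hc w0
    · exact hc w1
  have main : ∀ n, 1 ≤ n → coeff n g = 0 := by
    intro n
    induction n using Nat.strong_induction_on with
    | _ n IH =>
      intro hn
      set N := n + m - 1 with hNdef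
      have hnN : n < N := by omega
      have hkey : ∀ k, n ≤ k → k ≤ N →
          coeff N (h ^ k) = (if k = N then 1 else 0) + k * coeff (N - k + 1) w := by
        intro k hk1 hk2
        rw [hX]
        exact key w m hm hlow N k (by omega) hk2 (by omega)
      have hsum : coeff N (psComp g h) = coeff N g := by rw [hg]
      rw [psComp, coeff_mk] at hsum
      rw [Finset.sum_eq_add_of_mem n N (by simp [Finset.mem_range]; omega)
        (by simp [Finset.mem_range]) (by omega)] at hsum
      · have t1 : coeff n g * coeff N (h ^ n) = coeff n g * (n * coeff m w) := by
          rw [hkey n le_rfl (by omega), if_neg (by omega)]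
          have : N - n + 1 = m := by omega
          rw [this, zero_add]
        have t2 : coeff N g * coeff N (h ^ N) = coeff N g := by
          rw [hkey N (by omega) le_rfl, if_pos rfl]
          have : N - N + 1 = 1 := by omega
          rw [this, w1]
          ring
        rw [t1, t2] at hsum
        have hzero : coeff n g * (n * coeff m w) = 0 := by linarith
        have hn0 : (n : ℝ) ≠ 0 := Nat.cast_ne_zero.mpr (by omega)
        rcases mul_eq_zero.mp hzero with h' | h'
        · exact h'
        · rcases mul_eq_zero.mp h' with h'' | h''
          · exact absurd h'' hn0
          · exact absurd h'' hc
      · intro c hcmem hcc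
        obtain ⟨hc1, hc2⟩ := hcc
        simp only [Finset.mem_range] at hcmem
        rcases Nat.lt_or_ge c n with hlt | hge
        · rcases Nat.eq_zero_or_pos c with rfl | hcpos
          · have : coeff N ((h : PowerSeries ℝ) ^ 0) = 0 := by
              simp [coeff_one]
              omega
            rw [this, mul_zero]
          · rw [IH c hlt hcpos, zero_mul]
        · have : coeff N (h ^ c) = 0 := by
            rw [hkey c hge (by omega), if_neg hc2, hlow (N - c + 1) (by omega)]
            ring
          rw [this, mul_zero]
  ext n
  rcases Nat.eq_zero_or_pos n with rfl | hpos
  · simp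
  · rw [main n hpos, coeff_C, if_neg (by omega)]
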